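/- Let n ≥ 1, let f : ℝⁿ → ℝ be a convex function, x ∈ ℝⁿ and t > 0. Then ∂f(x) ⊆ D_t f(x). -/

import Mathlib

open scoped RealInnerProductSpace

/-- The ε-subdifferential of `g` at `x`. -/
def epsSubdiff {n : ℕ} (g : EuclideanSpace ℝ (Fin n) → ℝ) (ε : ℝ)
    (x : EuclideanSpace ℝ (Fin n)) : Set (EuclideanSpace ℝ (Fin n)) :=
  {ξ | ∀ y, g y ≥ g x + ⟪ξ, y - x⟫ - ε}

/-- The subdifferential of `g` at `x`. -/
def subdiff {n : ℕ} (g : EuclideanSpace ℝ (Fin n) → ℝ)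
    (x : EuclideanSpace ℝ (Fin n)) : Set (EuclideanSpace ℝ (Fin n)) :=
  {ξ | ∀ y, g y ≥ g x + ⟪ξ, y - x⟫}

/-- The t-spherical subdifferential of `g` at `x`. -/
def sphSubdiff {n : ℕ} (g : EuclideanSpace ℝ (Fin n) → ℝ) (t : ℝ)
    (x : EuclideanSpace ℝ (Fin n)) : Set (EuclideanSpace ℝ (Fin n)) :=
  convexHull ℝ {ξ | ∃ d : EuclideanSpace ℝ (Fin n), ‖d‖ = 1 ∧ ξ ∈ subdiff g (x + t • d)}

lemma subdiff_nonempty_aux {n : ℕ} {f : EuclideanSpace ℝ (Fin n) → ℝ}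
    (hf : ConvexOn ℝ Set.univ f) (z : EuclideanSpace ℝ (Fin n)) :
    (subdiff f z).Nonempty := by
  have hcont : Continuous f := hf.locallyLipschitz.continuous
  set U : Set (EuclideanSpace ℝ (Fin n) × ℝ) := {p | f p.1 < p.2} with hU
  have hUopen : IsOpen U := isOpen_lt (hcont.comp continuous_fst) continuous_snd
  have hUconv : Convex ℝ U := by
    intro p hp q hq a b ha hb hab
    simp only [hU, Set.mem_setOf_eq] at hp hq ⊢
    have h1 : f (a • p.1 + b • q.1) ≤ a * f p.1 + b * f q.1 :=
      hf.2 (Set.mem_univ _) (Set.mem_univ _) ha hb hab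
    have h2 : a * f p.1 + b * f q.1 < a * p.2 + b * q.2 := by
      rcases eq_or_lt_of_le ha with h | h
      · have hb1 : b = 1 := by linarith
        simp [← h, hb1, hq]
      · rcases eq_or_lt_of_le hb with h' | h'
        · have ha1 : a = 1 := by linarith
          simp [← h', ha1, hp]
        · exact add_lt_add (by nlinarith) (by nlinarith)
    have h3 : (a • p + b • q).1 = a • p.1 + b • q.1 := rfl
    have h4 : (a • p + b • q).2 = a * p.2 + b * q.2 := rfl
    rw [h3, h4]
    exact lt_of_le_of_lt h1 h2
  obtain ⟨φ, hφ⟩ := geometric_hahn_banach_open_point hUconv hUopen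
    (show (z, f z) ∉ U by simp [hU])
  set c := φ (0, 1) with hc
  have hφ_eq : ∀ (y : EuclideanSpace ℝ (Fin n)) (s : ℝ), φ (y, s) = φ (y, 0) + s * c := by
    intro y s
    have h : (y, s) = (y, (0:ℝ)) + s • ((0 : EuclideanSpace ℝ (Fin n)), (1:ℝ)) := by
      simp [Prod.ext_iff]
    rw [h, map_add, map_smul, smul_eq_mul, hc]
  have hcneg : c < 0 := by
    have h1 : φ (z, f z + 1) < φ (z, f z) := hφ _ (by simp [hU])
    rw [hφ_eq z (f z + 1), hφ_eq z (f z)] at h1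
    linarith
  have key : ∀ y, φ (y, 0) + f y * c ≤ φ (z, 0) + f z * c := by
    intro y
    by_contra h
    push_neg at h
    set δ := φ (y, 0) + f y * c - (φ (z, 0) + f z * c) with hδ
    have hδpos : 0 < δ := by linarith
    set ε := δ / (-c) / 2 with hε
    have hεpos : 0 < ε := by
      apply div_pos (div_pos hδpos (by linarith)) two_pos
    have h2 : φ (y, f y + ε) < φ (z, f z) := hφ _ (by simp [hU]; linarith)
    rw [hφ_eq y (f y + ε), hφ_eq z (f z)] at h2
    have hcne : (-c) ≠ 0 := by linarith
    have hεc : ε * (-c) = δ / 2 := by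
      rw [hε, div_right_comm]
      exact div_mul_cancel₀ _ hcne
    nlinarith
  set ψ : EuclideanSpace ℝ (Fin n) →L[ℝ] ℝ :=
    φ.comp (ContinuousLinearMap.inl ℝ (EuclideanSpace ℝ (Fin n)) ℝ) with hψ
  set v := (InnerProductSpace.toDual ℝ (EuclideanSpace ℝ (Fin n))).symm ψ with hv
  have hvy : ∀ y, ⟪v, y⟫ = φ (y, 0) := by
    intro y
    rw [hv, InnerProductSpace.toDual_symm_apply]
    rfl
  refine ⟨(-c)⁻¹ • v, fun y => ?_⟩
  have h3 : φ (y, 0) - φ (z, 0) ≤ (f y - f z) * (-c) := by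
    have := key y
    nlinarith
  have h4 : ⟪(-c)⁻¹ • v, y - z⟫ = (-c)⁻¹ * (φ (y, 0) - φ (z, 0)) := by
    rw [real_inner_smul_left, inner_sub_right, hvy, hvy]
  have h5 : (-c)⁻¹ * (φ (y, 0) - φ (z, 0)) ≤ f y - f z := by
    have hpos : (0:ℝ) < (-c)⁻¹ := inv_pos.mpr (by linarith)
    have := mul_le_mul_of_nonneg_left h3 hpos.le
    calc (-c)⁻¹ * (φ (y, 0) - φ (z, 0)) ≤ (-c)⁻¹ * ((f y - f z) * (-c)) := this
      _ = (f y - f z) * ((-c)⁻¹ * (-c)) := by ring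
      _ = f y - f z := by
          rw [inv_mul_cancel₀ (by linarith : (-c) ≠ (0:ℝ)), mul_one]
  rw [ge_iff_le, h4]
  linarith

lemma isCompact_convexHull_of_isCompact_aux {n : ℕ} {S : Set (EuclideanSpace ℝ (Fin n))}
    (hS : IsCompact S) (hne : S.Nonempty) : IsCompact (convexHull ℝ S) := by
  classical
  set N := n + 1 with hN
  set F : (Fin N → ℝ) × (Fin N → EuclideanSpace ℝ (Fin n)) → EuclideanSpace ℝ (Fin n) :=
    fun q => ∑ i, q.1 i • q.2 i with hF
  have hFcont : Continuous F := by
    apply continuous_finset_sum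
    intro i _
    exact ((continuous_apply i).comp continuous_fst).smul
      ((continuous_apply i).comp continuous_snd)
  set T := (stdSimplex ℝ (Fin N)) ×ˢ (Set.univ.pi fun _ : Fin N => S) with hT
  have hTc : IsCompact T := (isCompact_stdSimplex (𝕜 := ℝ) (ι := Fin N)).prod (isCompact_univ_pi fun _ => hS)
  have himg : convexHull ℝ S = F '' T := by
    apply Set.Subset.antisymm
    · intro ξ hξ
      obtain ⟨ι, hι, z, w, hzS, hai, hw0, hw1, hx⟩ := eq_pos_convex_span_of_mem_convexHull hξ
      have hcard : Fintype.card ι ≤ N := by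
        have h1 := hai.card_le_finrank_succ
        have h2 : Module.finrank ℝ (vectorSpan ℝ (Set.range z)) ≤ n := by
          have h3 := Submodule.finrank_le (vectorSpan ℝ (Set.range z))
          simpa [finrank_euclideanSpace_fin] using h3
        omega
      obtain ⟨e⟩ : Nonempty (ι ↪ Fin N) :=
        Function.Embedding.nonempty_of_card_le (by simpa using hcard)
      obtain ⟨s₀, hs₀⟩ := hne
      set w' : Fin N → ℝ := fun j => if h : ∃ i, e i = j then w h.choose else 0 with hw'
      set p' : Fin N → EuclideanSpace ℝ (Fin n) :=
        fun j => if h : ∃ i, e i = j then z h.choose else s₀ with hp'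
      have hw'e : ∀ i, w' (e i) = w i := by
        intro i
        have h : ∃ i', e i' = e i := ⟨i, rfl⟩
        simp only [hw', dif_pos h]
        rw [e.injective h.choose_spec]
      have hp'e : ∀ i, p' (e i) = z i := by
        intro i
        have h : ∃ i', e i' = e i := ⟨i, rfl⟩
        simp only [hp', dif_pos h]
        rw [e.injective h.choose_spec]
      have hsum : ∀ {M : Type} [AddCommMonoid M] (G : Fin N → M),
          (∀ j, (¬ ∃ i, e i = j) → G j = 0) → ∑ j, G j = ∑ i, G (e i) := by
        intro M _ G hG
        rw [show ∑ i, G (e i) = ∑ j ∈ Finset.univ.map e, G j from (Finset.sum_map _ e G).symm]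
        apply (Finset.sum_subset (Finset.subset_univ _) _).symm
        intro j _ hj
        apply hG
        intro ⟨i, hi⟩
        exact hj (Finset.mem_map.mpr ⟨i, Finset.mem_univ i, hi⟩)
      have hw'sum : ∑ j, w' j = 1 := by
        rw [hsum w' (fun j hj => dif_neg hj)]
        simp only [hw'e]
        exact hw1
      refine ⟨(w', p'), ⟨⟨fun j => ?_, hw'sum⟩, fun j _ => ?_⟩, ?_⟩
      · show (0:ℝ) ≤ w' j
        by_cases h : ∃ i, e i = j
        · simp only [hw', dif_pos h]; exact (hw0 _).le
        · simp only [hw', dif_neg h]; exact le_refl _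
      · show p' j ∈ S
        by_cases h : ∃ i, e i = j
        · simp only [hp', dif_pos h]; exact hzS (Set.mem_range_self _)
        · simp only [hp', dif_neg h]; exact hs₀
      · show ∑ j, w' j • p' j = ξ
        rw [hsum (fun j => w' j • p' j)
          (fun j hj => by simp only [hw', dif_neg hj, zero_smul])]
        simp only [hw'e, hp'e]
        exact hx
    · rintro ξ ⟨⟨w, p⟩, ⟨⟨hw0, hw1⟩, hp⟩, rfl⟩
      have h := Finset.univ.centerMass_mem_convexHull (w := w) (z := p)
        (fun i _ => hw0 i) (by rw [hw1]; exact one_pos)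
        (fun i _ => hp i (Set.mem_univ i))
      rwa [Finset.centerMass_eq_of_sum_1 _ _ hw1] at h
  rw [himg]
  exact hTc.image hFcont

theorem subdiff_subset_sphSubdiff {n : ℕ} (hn : 1 ≤ n)
    (f : EuclideanSpace ℝ (Fin n) → ℝ) (hf : ConvexOn ℝ Set.univ f)
    (x : EuclideanSpace ℝ (Fin n)) (t : ℝ) (ht : 0 < t) :
    subdiff f x ⊆ sphSubdiff f t x := by
  classical
  intro ξ hξ
  have hcont : Continuous f := hf.locallyLipschitz.continuous
  set S : Set (EuclideanSpace ℝ (Fin n)) :=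
    {η | ∃ d : EuclideanSpace ℝ (Fin n), ‖d‖ = 1 ∧ η ∈ subdiff f (x + t • d)} with hS
  have hd₀ : ‖(EuclideanSpace.single (⟨0, hn⟩ : Fin n) (1:ℝ))‖ = 1 := by
    rw [EuclideanSpace.norm_single]; norm_num
  obtain ⟨η₀, hη₀⟩ := subdiff_nonempty_aux hf
    (x + t • EuclideanSpace.single (⟨0, hn⟩ : Fin n) (1:ℝ))
  have hSne : S.Nonempty := ⟨η₀, _, hd₀, hη₀⟩
  obtain ⟨y₀, hy₀, hM'⟩ := (isCompact_closedBall x (t+1)).exists_isMaxOn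
    ⟨x, Metric.mem_closedBall_self (by linarith)⟩ hcont.continuousOn
  have hM : ∀ y ∈ Metric.closedBall x (t+1), f y ≤ f y₀ := isMaxOn_iff.mp hM'
  set R := f y₀ - f x + ‖ξ‖ * t with hR
  have hbound : ∀ η ∈ S, ‖η‖ ≤ R := by
    rintro η ⟨d, hd, hη⟩
    set z := x + t • d with hz
    have hzdist : dist z x = t := by
      rw [hz, dist_eq_norm, add_sub_cancel_left, norm_smul, hd]
      simp [abs_of_pos ht]
    have hzlow : f z ≥ f x - ‖ξ‖ * t := by
      have h1 := hξ z
      have h2 : |⟪ξ, z - x⟫| ≤ ‖ξ‖ * t := by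
        calc |⟪ξ, z - x⟫| ≤ ‖ξ‖ * ‖z - x‖ := abs_real_inner_le_norm _ _
          _ = ‖ξ‖ * t := by rw [← dist_eq_norm, hzdist]
      have h3 := abs_le.mp h2
      linarith [h3.1]
    have hzM : f z ≤ f y₀ := hM z (by rw [Metric.mem_closedBall, hzdist]; linarith)
    rcases eq_or_ne η 0 with h | h
    · rw [h, norm_zero, hR]
      linarith
    · set y := z + ‖η‖⁻¹ • η with hy
      have hηne : ‖η‖ ≠ 0 := norm_ne_zero_iff.mpr h
      have hyz : y - z = ‖η‖⁻¹ • η := by rw [hy]; abel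
      have hinner : ⟪η, y - z⟫ = ‖η‖ := by
        rw [hyz, real_inner_smul_right, real_inner_self_eq_norm_sq, pow_two,
          ← mul_assoc, inv_mul_cancel₀ hηne, one_mul]
      have hyball : y ∈ Metric.closedBall x (t+1) := by
        rw [Metric.mem_closedBall, dist_eq_norm]
        have hyx : y - x = t • d + ‖η‖⁻¹ • η := by rw [hy, hz]; abel
        rw [hyx]
        calc ‖t • d + ‖η‖⁻¹ • η‖ ≤ ‖t • d‖ + ‖‖η‖⁻¹ • η‖ := norm_add_le _ _
          _ = t + 1 := by
              rw [norm_smul, norm_smul, hd, norm_inv, norm_norm,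
                inv_mul_cancel₀ hηne, mul_one]
              simp [abs_of_pos ht]
      have h1 := hη y
      rw [hinner] at h1
      have h2 : f y ≤ f y₀ := hM y hyball
      linarith
  -- compactness of S
  set A : Set ((EuclideanSpace ℝ (Fin n)) × (EuclideanSpace ℝ (Fin n))) :=
    {p | ‖p.1‖ = 1 ∧ p.2 ∈ subdiff f (x + t • p.1)} with hA
  have hAclosed : IsClosed A := by
    have h1 : IsClosed {p : (EuclideanSpace ℝ (Fin n)) × (EuclideanSpace ℝ (Fin n)) |
        ‖p.1‖ = 1} := isClosed_eq continuous_fst.norm continuous_const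
    have h2 : IsClosed {p : (EuclideanSpace ℝ (Fin n)) × (EuclideanSpace ℝ (Fin n)) |
        p.2 ∈ subdiff f (x + t • p.1)} := by
      have heq : {p : (EuclideanSpace ℝ (Fin n)) × (EuclideanSpace ℝ (Fin n)) |
          p.2 ∈ subdiff f (x + t • p.1)} =
          ⋂ y, {p : (EuclideanSpace ℝ (Fin n)) × (EuclideanSpace ℝ (Fin n)) |
            f (x + t • p.1) + ⟪p.2, y - (x + t • p.1)⟫ ≤ f y} := by
        ext p
        simp only [Set.mem_iInter, Set.mem_setOf_eq]
        exact ⟨fun hmem y => hmem y, fun hmem y => hmem y⟩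
      rw [heq]
      apply isClosed_iInter
      intro y
      have hg : Continuous (fun p : (EuclideanSpace ℝ (Fin n)) × (EuclideanSpace ℝ (Fin n)) =>
          x + t • p.1) := continuous_const.add (continuous_fst.const_smul t)
      exact isClosed_le ((hcont.comp hg).add
        (continuous_snd.inner (continuous_const.sub hg))) continuous_const
    exact h1.inter h2
  set T := A ∩ (Metric.closedBall 0 1 ×ˢ Metric.closedBall 0 R) with hTdef
  have hTc : IsCompact T :=
    IsCompact.of_isClosed_subset
      ((isCompact_closedBall (0 : EuclideanSpace ℝ (Fin n)) 1).prod
        (isCompact_closedBall (0 : EuclideanSpace ℝ (Fin n)) R))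
      (hAclosed.inter (Metric.isClosed_closedBall.prod Metric.isClosed_closedBall))
      Set.inter_subset_right
  have hST : S = Prod.snd '' T := by
    ext η
    constructor
    · rintro ⟨d, hd, hη⟩
      refine ⟨(d, η), ⟨⟨hd, hη⟩, Set.mem_prod.mpr ⟨?_, ?_⟩⟩, rfl⟩
      · rw [mem_closedBall_zero_iff, hd]
      · rw [mem_closedBall_zero_iff]
        exact hbound η ⟨d, hd, hη⟩
    · rintro ⟨⟨d, η'⟩, ⟨⟨hd, hη⟩, -⟩, rfl⟩
      exact ⟨d, hd, hη⟩
  have hSc : IsCompact S := hST ▸ hTc.image continuous_snd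
  -- separation argument
  show ξ ∈ convexHull ℝ S
  by_contra hc
  have hclosed : IsClosed (convexHull ℝ S) :=
    (isCompact_convexHull_of_isCompact_aux hSc hSne).isClosed
  obtain ⟨φ, u, hφu, huξ⟩ :=
    geometric_hahn_banach_closed_point (convex_convexHull ℝ S) hclosed hc
  set v := (InnerProductSpace.toDual ℝ (EuclideanSpace ℝ (Fin n))).symm φ with hv
  have hvy : ∀ y, ⟪v, y⟫ = φ y := fun y => InnerProductSpace.toDual_symm_apply
  have hvne : v ≠ 0 := by
    intro h0
    have hmem : η₀ ∈ S := ⟨_, hd₀, hη₀⟩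
    have h1 : φ η₀ < u := hφu η₀ (subset_convexHull ℝ S hmem)
    have h2 : φ η₀ = 0 := by rw [← hvy, h0, inner_zero_left]
    have h3 : φ ξ = 0 := by rw [← hvy, h0, inner_zero_left]
    rw [h2] at h1
    rw [h3] at huξ
    linarith
  set d := ‖v‖⁻¹ • v with hd
  have hdnorm : ‖d‖ = 1 := by
    rw [hd, norm_smul, norm_inv, norm_norm, inv_mul_cancel₀ (norm_ne_zero_iff.mpr hvne)]
  obtain ⟨η, hη⟩ := subdiff_nonempty_aux hf (x + t • d)
  have hmemS : η ∈ S := ⟨d, hdnorm, hη⟩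
  have h1 : φ η < φ ξ := lt_trans (hφu η (subset_convexHull ℝ S hmemS)) huξ
  have ha := hξ (x + t • d)
  have hb := hη x
  rw [add_sub_cancel_left] at ha
  have hxz : x - (x + t • d) = -(t • d) := by abel
  rw [hxz, inner_neg_right] at hb
  have hmono : ⟪ξ, t • d⟫ ≤ ⟪η, t • d⟫ := by linarith
  have heq2 : ∀ w : EuclideanSpace ℝ (Fin n), ⟪w, t • d⟫ = (t * ‖v‖⁻¹) * ⟪w, v⟫ := by
    intro w
    rw [hd, smul_smul, real_inner_smul_right]
  rw [heq2, heq2] at hmono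
  have hpos : 0 < t * ‖v‖⁻¹ := by
    have h0 : 0 < ‖v‖ := norm_pos_iff.mpr hvne
    positivity
  have hmono2 : ⟪ξ, v⟫ ≤ ⟪η, v⟫ := le_of_mul_le_mul_left hmono hpos
  rw [← hvy η, ← hvy ξ] at h1
  have hc1 : ⟪ξ, v⟫ = ⟪v, ξ⟫ := real_inner_comm _ _
  have hc2 : ⟪η, v⟫ = ⟪v, η⟫ := real_inner_comm _ _
  linarith
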